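/- For all t ∈ [0, T], the function A(t) = −∫_t^T y(s) ds satisfies A(t) = (√(αβ)/2)·( t − T − √(α/β)·( log(1 + u·e^{−2ω(T−t)}) − log(1 + u) ) ). -/

import Mathlib

/-- For all `t ∈ [0, T]`, the function `A(t) = −∫_t^T y(s) ds` satisfies
`A(t) = (√(αβ)/2)·(t − T − √(α/β)·(log(1 + u·e^{−2ω(T−t)}) − log(1 + u)))`. -/
theorem stmt_1 (α β γ T : ℝ) (hα : 0 < α) (hβ : 0 < β) (hγ : 0 < γ) (hT : 0 < T)
    (ω u : ℝ) (hω : ω = Real.sqrt (β / α))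
    (hu : u = (Real.sqrt (α * β) - γ) / (Real.sqrt (α * β) + γ))
    (y : ℝ → ℝ)
    (hy : ∀ t, y t = (Real.sqrt (α * β) / 2) *
      (1 - u * Real.exp (-2 * ω * (T - t))) / (1 + u * Real.exp (-2 * ω * (T - t))))
    (A : ℝ → ℝ) (hA : ∀ t, A t = -∫ s in t..T, y s) :
    ∀ t ∈ Set.Icc (0 : ℝ) T,
      A t = (Real.sqrt (α * β) / 2) *
        (t - T - Real.sqrt (α / β) *
          (Real.log (1 + u * Real.exp (-2 * ω * (T - t))) - Real.log (1 + u))) := by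
  intro t ht
  obtain ⟨ht0, htT⟩ := ht
  set c := Real.sqrt (α * β) with hc
  set k := Real.sqrt (α / β) with hk
  have hcpos : 0 < c := Real.sqrt_pos.mpr (mul_pos hα hβ)
  have hωpos : 0 < ω := by rw [hω]; exact Real.sqrt_pos.mpr (div_pos hβ hα)
  have hkω : k * ω = 1 := by
    rw [hk, hω, ← Real.sqrt_mul (le_of_lt (div_pos hα hβ))]
    rw [show α / β * (β / α) = 1 by field_simp]
    exact Real.sqrt_one
  have huabs : |u| < 1 := by
    rw [hu, abs_div, abs_of_pos (by linarith : (0:ℝ) < c + γ)]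
    rw [div_lt_one (by linarith)]
    rw [abs_lt]; constructor <;> [linarith; linarith]
  have hpos : ∀ s : ℝ, s ≤ T → 0 < 1 + u * Real.exp (-2 * ω * (T - s)) := by
    intro s hs
    have he1 : Real.exp (-2 * ω * (T - s)) ≤ 1 := by
      rw [Real.exp_le_one_iff]
      nlinarith
    have he0 : 0 < Real.exp (-2 * ω * (T - s)) := Real.exp_pos _
    have : |u * Real.exp (-2 * ω * (T - s))| < 1 := by
      rw [abs_mul, abs_of_pos he0]
      nlinarith [abs_nonneg u]
    nlinarith [abs_lt.mp this]
  -- antiderivative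
  set F : ℝ → ℝ := fun s => (c / 2) * (s - k * Real.log (1 + u * Real.exp (-2 * ω * (T - s))))
    with hF
  have hderiv : ∀ s ∈ Set.uIcc t T, HasDerivAt F (y s) s := by
    intro s hs
    have hsT : s ≤ T := by
      rcases Set.mem_uIcc.mp hs with h | h
      · exact h.2
      · linarith [h.2]
    have hgpos := hpos s hsT
    have hgn : 1 + u * Real.exp (-2 * ω * (T - s)) ≠ 0 := ne_of_gt hgpos
    have hinner : HasDerivAt (fun x : ℝ => -2 * ω * (T - x)) (2 * ω) s := by
      have := ((hasDerivAt_id s).const_sub T).const_mul (-2 * ω)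
      rw [show (2 * ω) = -2 * ω * -1 by ring]; exact this
    have hg : HasDerivAt (fun x : ℝ => 1 + u * Real.exp (-2 * ω * (T - x)))
        (u * (Real.exp (-2 * ω * (T - s)) * (2 * ω))) s := by
      have := ((hinner.exp).const_mul u).const_add 1
      convert this using 1
      try ring
    have hlog : HasDerivAt (fun x : ℝ => Real.log (1 + u * Real.exp (-2 * ω * (T - x))))
        (u * (Real.exp (-2 * ω * (T - s)) * (2 * ω)) / (1 + u * Real.exp (-2 * ω * (T - s)))) s :=
      hg.log hgn
    have hFd : HasDerivAt F
        ((c / 2) * (1 - k * (u * (Real.exp (-2 * ω * (T - s)) * (2 * ω)) /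
          (1 + u * Real.exp (-2 * ω * (T - s)))))) s :=
      ((hasDerivAt_id s).sub (hlog.const_mul k)).const_mul (c / 2)
    rw [show y s = c / 2 * (1 - k * (u * (Real.exp (-2 * ω * (T - s)) * (2 * ω)) /
          (1 + u * Real.exp (-2 * ω * (T - s))))) from ?_]
    · exact hFd
    · rw [hy s]
      set E := Real.exp (-2 * ω * (T - s)) with hE
      field_simp
      linear_combination (2 * u * E) * hkω
  have hcont : IntervalIntegrable y MeasureTheory.volume t T := by
    apply ContinuousOn.intervalIntegrable
    have : ∀ s ∈ Set.uIcc t T, y s = (c / 2) * (1 - u * Real.exp (-2 * ω * (T - s))) /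
        (1 + u * Real.exp (-2 * ω * (T - s))) := fun s _ => hy s
    refine ContinuousOn.congr ?_ fun s hs => hy s
    apply ContinuousOn.div
    · fun_prop
    · fun_prop
    · intro s hs
      have hsT : s ≤ T := by
        rcases Set.mem_uIcc.mp hs with h | h
        · exact h.2
        · linarith [h.2]
      exact ne_of_gt (hpos s hsT)
  have hint : ∫ s in t..T, y s = F T - F t :=
    intervalIntegral.integral_eq_sub_of_hasDerivAt hderiv hcont
  rw [hA, hint, hF]
  simp only [sub_self, mul_zero, neg_zero, Real.exp_zero, mul_one]
  ring
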